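/- No group G can be partitioned into three or more pairwise disjoint nonempty subsets each of which is 3-large (both left and right 3-large). -/
import Mathlib


open Pointwise Cardinal

/-- Key lemma: two disjoint sets, neither containing `1`, cannot both be large
in the respective (left/right) sense. -/
lemma key_large {G : Type*} [Group G] {A B : Set G} (hdisj : Disjoint A B)
    (h1A : (1 : G) ∉ A) (h1B : (1 : G) ∉ B)
    (hA : ∃ g : G, A ∪ g • A = Set.univ)
    (hB : ∃ h : G, B ∪ B * {h} = Set.univ) : False := by
  obtain ⟨g, hg⟩ := hA
  obtain ⟨h, hh⟩ := hB
  have hAmem : ∀ x : G, x ∉ A → g⁻¹ * x ∈ A := by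
    intro x hx
    have : x ∈ A ∪ g • A := hg ▸ Set.mem_univ x
    rcases this with h' | h'
    · exact absurd h' hx
    · obtain ⟨y, hy, rfl⟩ := h'
      simpa using hy
  have hBmem : ∀ x : G, x ∉ B → x * h⁻¹ ∈ B := by
    intro x hx
    have : x ∈ B ∪ B * {h} := hh ▸ Set.mem_univ x
    rcases this with h' | h'
    · exact absurd h' hx
    · obtain ⟨b, hb, c, hc, rfl⟩ := h'
      simp only [Set.mem_singleton_iff] at hc
      subst hc
      simpa using hb
  have ha : g⁻¹ ∈ A := by simpa using hAmem 1 h1A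
  have hb : h⁻¹ ∈ B := by simpa using hBmem 1 h1B
  have hbA : h⁻¹ ∉ A := fun hmem => Set.disjoint_left.mp hdisj hmem hb
  have haB : g⁻¹ ∉ B := fun hmem => Set.disjoint_left.mp hdisj ha hmem
  have h1 : g⁻¹ * h⁻¹ ∈ A := hAmem h⁻¹ hbA
  have h2 : g⁻¹ * h⁻¹ ∈ B := hBmem g⁻¹ haB
  exact Set.disjoint_left.mp hdisj h1 h2

theorem no_partition_into_three_three_large {G : Type*} [Group G]
    (P : Set (Set G))
    (hdisj : P.PairwiseDisjoint id)
    (hne : ∀ A ∈ P, A.Nonempty)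
    (hcov : ⋃₀ P = Set.univ)
    (hlarge : ∀ A ∈ P, (∃ g : G, A ∪ g • A = Set.univ) ∧
                        (∃ h : G, A ∪ A * {h} = Set.univ)) :
    #P ≤ 2 := by
  by_contra hlt
  have h3 : (3 : Cardinal) ≤ #P := by
    have h2 : (2 : Cardinal) < #P := not_le.mp hlt
    have : ((2 : ℕ) : Cardinal) < #P := by exact_mod_cast h2
    rw [← Order.succ_le_iff, ← Cardinal.nat_succ] at this
    exact_mod_cast this
  -- the cell containing 1
  have h1mem : (1 : G) ∈ ⋃₀ P := hcov ▸ Set.mem_univ 1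
  obtain ⟨D, hDP, h1D⟩ := h1mem
  obtain ⟨⟨X, hX⟩, hX1, _⟩ := Cardinal.three_le h3 ⟨D, hDP⟩ ⟨D, hDP⟩
  obtain ⟨⟨Y, hY⟩, hY1, hY2⟩ := Cardinal.three_le h3 ⟨D, hDP⟩ ⟨X, hX⟩
  have hXD : X ≠ D := fun h => hX1 (by simp [h])
  have hYD : Y ≠ D := fun h => hY1 (by simp [h])
  have hYX : Y ≠ X := fun h => hY2 (by simp [h])
  have hnot1 : ∀ E, E ∈ P → E ≠ D → (1 : G) ∉ E := by
    intro E hE hED h1E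
    exact Set.disjoint_left.mp (hdisj hE hDP hED) h1E h1D
  exact key_large (hdisj hX hY hYX.symm) (hnot1 X hX hXD) (hnot1 Y hY hYD)
    (hlarge X hX).1 (hlarge Y hY).2
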